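/- Let F_1,...,F_n be marginal distributions on the nonnegative reals, each having a density and satisfying the monotone hazard rate (MHR) property. For each i let μ_i be the median of F_i, and let i be an item whose median μ_i is (weakly) largest. Then the single pricing p that sets p_i = μ_i and p_j = ∞ for every j ≠ i is 3.5-max-min optimal: R(p) ≥ R*/3.5, where R* is the optimal robust revenue guarantee over all pricings. -/

import Mathlib

open MeasureTheory
open scoped ENNReal NNReal

noncomputable section

/-- A buyer's purchase rule for `n` items: given a valuation profile and a vector of item prices
(in `[0,∞]`), `choose` returns the purchased item (or `none` if nothing is purchased).
The axioms say: a purchased item has a finite price and yields nonnegative utility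
(`feasible`), the purchased item maximizes utility among all items (`optimal`), and the buyer
does purchase whenever some item yields nonnegative utility (`active`). Ties among
utility-maximizing items are broken according to the (fixed) rule embodied by `choose`. -/
structure BuyerRule (n : ℕ) where
  choose : (Fin n → ℝ) → (Fin n → ℝ≥0∞) → Option (Fin n)
  feasible : ∀ v p j, choose v p = some j → p j ≠ ⊤ ∧ (p j).toReal ≤ v j
  optimal : ∀ v p j k, choose v p = some j → p k ≠ ⊤ →
      v k - (p k).toReal ≤ v j - (p j).toReal
  active : ∀ v p, (∃ k, p k ≠ ⊤ ∧ (p k).toReal ≤ v k) → (choose v p).isSome = true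

/-- The seller's revenue from valuation profile `v` under pricing `p`. -/
def BuyerRule.revenue {n : ℕ} (B : BuyerRule n) (p : Fin n → ℝ≥0∞) (v : Fin n → ℝ) : ℝ≥0∞ :=
  (B.choose v p).elim 0 (fun j => p j)

/-- A joint distribution `F` on valuation profiles is compatible with the marginals `marg`
if it is a probability measure whose `j`-th one-dimensional marginal is `marg j` for every `j`. -/
def Compatible {n : ℕ} (marg : Fin n → Measure ℝ) (F : Measure (Fin n → ℝ)) : Prop :=
  IsProbabilityMeasure F ∧ ∀ j, F.map (fun v => v j) = marg j

/-- `R(p,F)`: the expected revenue of pricing `p` under joint distribution `F`. -/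
def expRev {n : ℕ} (B : BuyerRule n) (p : Fin n → ℝ≥0∞) (F : Measure (Fin n → ℝ)) : ℝ≥0∞ :=
  ∫⁻ v, B.revenue p v ∂F

/-- `R(p)`: the robust revenue guarantee of `p`, the infimum of `R(p,F)` over compatible `F`. -/
def robustRev {n : ℕ} (B : BuyerRule n) (marg : Fin n → Measure ℝ) (p : Fin n → ℝ≥0∞) : ℝ≥0∞ :=
  ⨅ (F : Measure (Fin n → ℝ)) (_ : Compatible marg F), expRev B p F

/-- `R*`: the optimal robust revenue guarantee over all pricings. -/
def optRobust {n : ℕ} (B : BuyerRule n) (marg : Fin n → Measure ℝ) : ℝ≥0∞ :=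
  ⨆ p : Fin n → ℝ≥0∞, robustRev B marg p

/-- A distribution `μ` on `[0,∞)` with density `f` has monotone hazard rate (MHR):
its hazard rate `h(x) = f(x)/(1 − F(x)) = f(x)/μ(x,∞)` is nondecreasing on the support of `μ`
(i.e. wherever the upper tail still has positive mass). -/
def IsMHR (f : ℝ → ℝ) (μ : Measure ℝ) : Prop :=
  ∀ x y : ℝ, x ≤ y → μ (Set.Ioi y) ≠ 0 →
    f x / (μ (Set.Ioi x)).toReal ≤ f y / (μ (Set.Ioi y)).toReal

namespace RobustAux

open Set Real Filter Topology

/-- The generalized inverse (quantile) function of a cdf-like function. -/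
def Q (c : ℝ → ℝ) (u : ℝ) : ℝ := sInf {x | u ≤ c x ∨ 1 ≤ u}

/-- Properties of the cdf of a probability distribution on `[0,∞)` without atoms. -/
structure CdfLike (c : ℝ → ℝ) : Prop where
  mono : Monotone c
  nonneg : ∀ x, 0 ≤ c x
  le_one : ∀ x, c x ≤ 1
  zero : ∀ x, x < 0 → c x = 0
  rc : ∀ b u, (∀ ε : ℝ, 0 < ε → u ≤ c (b + ε)) → u ≤ c b
  sup : ∀ u, u < 1 → ∃ x, u ≤ c x

variable {c : ℝ → ℝ} {u b : ℝ}

lemma not_bddBelow_univ_real : ¬ BddBelow (Set.univ : Set ℝ) := by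
  rintro ⟨lb, hlb⟩
  have := hlb (Set.mem_univ (lb - 1))
  change lb ≤ lb - 1 at this
  linarith

lemma Q_eq_zero_of_nonpos (h : CdfLike c) (hu : u ≤ 0) : Q c u = 0 := by
  have hset : {x | u ≤ c x ∨ 1 ≤ u} = Set.univ := by
    ext x; simp only [Set.mem_setOf_eq, Set.mem_univ, iff_true]
    exact Or.inl (hu.trans (h.nonneg x))
  rw [Q, hset, Real.sInf_of_not_bddBelow not_bddBelow_univ_real]

lemma Q_eq_zero_of_one_le (hu : 1 ≤ u) : Q c u = 0 := by
  have hset : {x | u ≤ c x ∨ 1 ≤ u} = Set.univ := by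
    ext x; simp only [Set.mem_setOf_eq, Set.mem_univ, iff_true]
    exact Or.inr hu
  rw [Q, hset, Real.sInf_of_not_bddBelow not_bddBelow_univ_real]

lemma Qset_eq (hu1 : u < 1) : {x | u ≤ c x ∨ 1 ≤ u} = {x | u ≤ c x} := by
  ext x; simp [hu1.not_ge]

lemma Qset_bddBelow (h : CdfLike c) (hu0 : 0 < u) : BddBelow {x | u ≤ c x} := by
  refine ⟨0, fun x hx => ?_⟩
  by_contra hneg
  push_neg at hneg
  have := h.zero x hneg
  simp only [Set.mem_setOf_eq, this] at hx
  linarith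

lemma Qset_nonempty (h : CdfLike c) (hu1 : u < 1) : {x | u ≤ c x}.Nonempty :=
  h.sup u hu1

lemma Q_le_of_le_c (h : CdfLike c) (hu0 : 0 < u) (hu1 : u < 1) (hb : u ≤ c b) :
    Q c u ≤ b := by
  rw [Q, Qset_eq hu1]
  exact csInf_le (Qset_bddBelow h hu0) hb

lemma Q_nonneg (h : CdfLike c) (hu0 : 0 < u) (hu1 : u < 1) : 0 ≤ Q c u := by
  rw [Q, Qset_eq hu1]
  refine le_csInf (Qset_nonempty h hu1) fun x hx => ?_
  by_contra hneg
  push_neg at hneg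
  have := h.zero x hneg
  simp only [Set.mem_setOf_eq, this] at hx
  linarith

lemma le_c_of_Q_le (h : CdfLike c) (hu0 : 0 < u) (hu1 : u < 1) (hQ : Q c u ≤ b) :
    u ≤ c b := by
  refine h.rc b u fun ε hε => ?_
  rw [Q, Qset_eq hu1] at hQ
  obtain ⟨y, hy, hylt⟩ := exists_lt_of_csInf_lt (Qset_nonempty h hu1)
    (lt_of_le_of_lt hQ (by linarith : b < b + ε))
  exact hy.trans (h.mono hylt.le)

lemma Q_le_iff (h : CdfLike c) (hu0 : 0 < u) (hu1 : u < 1) :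
    Q c u ≤ b ↔ u ≤ c b :=
  ⟨le_c_of_Q_le h hu0 hu1, Q_le_of_le_c h hu0 hu1⟩

lemma measurable_Q (h : CdfLike c) : Measurable (Q c) := by
  apply measurable_of_Iic
  intro b
  have hdesc : Q c ⁻¹' (Iic b) =
      (Ioo (0:ℝ) 1 ∩ Iic (c b)) ∪ (if 0 ≤ b then (Iic (0:ℝ) ∪ Ici (1:ℝ)) else (∅ : Set ℝ)) := by
    ext u
    by_cases hu0 : u ≤ 0
    · have hQ0 : Q c u = 0 := Q_eq_zero_of_nonpos h hu0
      by_cases hb : 0 ≤ b <;>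
        simp [hQ0, hb, hu0, Set.mem_Ioo, not_lt.mpr hu0, fun hc : u ≤ 0 => hc]
    · push_neg at hu0
      by_cases hu1 : 1 ≤ u
      · have hQ0 : Q c u = 0 := Q_eq_zero_of_one_le hu1
        by_cases hb : 0 ≤ b <;> simp [hQ0, hb, hu1, hu0, not_lt.mpr hu1, not_le.mpr hu0]
      · push_neg at hu1
        have := Q_le_iff (b := b) h hu0 hu1
        by_cases hb : 0 ≤ b <;>
          simp [this, hb, hu0, hu1, not_le.mpr hu0, not_le.mpr hu1]
  rw [hdesc]
  by_cases hb : 0 ≤ b <;> simp [hb] <;> measurability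


lemma lint_w (r : ℝ) (hr : 0 ≤ r) {s t : ℝ} (hst : s ≤ t) :
    ∫⁻ σ in Ioc s t, ENNReal.ofReal (r * exp (r * σ)) ∂volume
      = ENNReal.ofReal (exp (r * t) - exp (r * s)) := by
  have hderiv : ∀ x ∈ uIcc s t, HasDerivAt (fun σ => exp (r * σ)) (r * exp (r * x)) x := by
    intro x _
    simpa [mul_comm] using ((hasDerivAt_id x).const_mul r).exp
  have hcont : Continuous fun σ => r * exp (r * σ) := by continuity
  have hint : ∫ σ in s..t, r * exp (r * σ) = exp (r * t) - exp (r * s) :=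
    intervalIntegral.integral_eq_sub_of_hasDerivAt hderiv (hcont.intervalIntegrable s t)
  rw [intervalIntegral.integral_of_le hst] at hint
  rw [← hint, ← ofReal_integral_eq_lintegral_ofReal]
  · exact hcont.integrableOn_Ioc
  · exact ae_of_all _ fun x => mul_nonneg hr (exp_pos _).le

/-- The key integration-by-parts/Fubini identity. -/
lemma exp_identity (μ : Measure ℝ) [IsFiniteMeasure μ] (hatom : ∀ x : ℝ, μ {x} = 0)
    {r a b : ℝ} (hr : 0 ≤ r) (hab : a ≤ b) :
    (∫⁻ τ in Ioc a b, ENNReal.ofReal (exp (r * τ)) ∂μ)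
      + μ (Ioi b) * ENNReal.ofReal (exp (r * b) - exp (r * a))
    = ENNReal.ofReal (exp (r * a)) * μ (Ioc a b)
      + ∫⁻ σ in Ioc a b, ENNReal.ofReal (r * exp (r * σ)) * μ (Ioi σ) ∂volume := by
  set w : ℝ → ℝ≥0∞ := fun σ => ENNReal.ofReal (r * exp (r * σ)) with hw
  have hwm : Measurable w := by
    apply Measurable.ennreal_ofReal; fun_prop
  have hTmeas : Measurable fun σ => μ (Icc σ b) :=
    Antitone.measurable (fun s t hst => measure_mono (Icc_subset_Icc_left hst))
  -- step 1 : expand e^{rτ}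
  have hEsplit : (∫⁻ τ in Ioc a b, ENNReal.ofReal (exp (r * τ)) ∂μ)
      = ENNReal.ofReal (exp (r * a)) * μ (Ioc a b)
        + ∫⁻ τ in Ioc a b, (∫⁻ σ in Ioc a τ, w σ ∂volume) ∂μ := by
    have h1 : ∀ τ ∈ Ioc a b, ENNReal.ofReal (exp (r * τ))
        = ENNReal.ofReal (exp (r * a)) + ∫⁻ σ in Ioc a τ, w σ ∂volume := by
      intro τ hτ
      rw [lint_w r hr hτ.1.le, ← ENNReal.ofReal_add (exp_pos _).le
        (sub_nonneg.mpr (exp_le_exp.mpr (mul_le_mul_of_nonneg_left hτ.1.le hr)))]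
      ring_nf
    rw [setLIntegral_congr_fun_ae measurableSet_Ioc (ae_of_all _ h1),
      lintegral_add_left measurable_const, setLIntegral_const]
  -- step 2 : swap the double integral
  have hswap : (∫⁻ τ in Ioc a b, (∫⁻ σ in Ioc a τ, w σ ∂volume) ∂μ)
      = ∫⁻ σ in Ioc a b, w σ * μ (Icc σ b) ∂volume := by
    have hG : Measurable (Function.uncurry fun τ σ : ℝ => (Iic τ).indicator w σ) := by
      have : (Function.uncurry fun τ σ : ℝ => (Iic τ).indicator w σ)
          = fun q : ℝ × ℝ => if q.2 ≤ q.1 then w q.2 else 0 := by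
        funext q
        simp [Function.uncurry, Set.indicator_apply]
      rw [this]
      exact Measurable.ite (measurableSet_le measurable_snd measurable_fst)
        (hwm.comp measurable_snd) measurable_const
    have h2 : ∀ τ ∈ Ioc a b, (∫⁻ σ in Ioc a τ, w σ ∂volume)
        = ∫⁻ σ in Ioc a b, (Iic τ).indicator w σ ∂volume := by
      intro τ hτ
      have hseteq : Iic τ ∩ Ioc a b = Ioc a τ := by
        ext σ
        simp only [mem_inter_iff, mem_Iic, mem_Ioc]
        constructor
        · rintro ⟨h1', h2', _⟩; exact ⟨h2', h1'⟩
        · rintro ⟨h1', h2'⟩; exact ⟨h2', h1', h2'.trans hτ.2⟩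
      rw [lintegral_indicator measurableSet_Iic, Measure.restrict_restrict measurableSet_Iic,
        hseteq]
    rw [setLIntegral_congr_fun_ae measurableSet_Ioc (ae_of_all _ h2),
      lintegral_lintegral_swap hG.aemeasurable]
    refine setLIntegral_congr_fun_ae measurableSet_Ioc (ae_of_all _ fun σ hσ => ?_)
    have hpt : ∀ τ, (Iic τ).indicator w σ = (Ici σ).indicator (fun _ => w σ) τ := by
      intro τ; simp only [Set.indicator_apply, mem_Iic, mem_Ici]
    simp_rw [hpt]
    have hseteq : Ici σ ∩ Ioc a b = Icc σ b := by
      ext τ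
      simp only [mem_inter_iff, mem_Ici, mem_Ioc, mem_Icc]
      constructor
      · rintro ⟨h1', _, h3'⟩; exact ⟨h1', h3'⟩
      · rintro ⟨h1', h2'⟩; exact ⟨h1', hσ.1.trans_le h1', h2'⟩
    rw [lintegral_indicator measurableSet_Ici, Measure.restrict_restrict measurableSet_Ici,
      hseteq, setLIntegral_const]
  -- step 3 : Icc σ b + Ioi b = Ioi σ
  have hICC : ∀ σ ∈ Ioc a b, μ (Icc σ b) + μ (Ioi b) = μ (Ioi σ) := by
    intro σ hσ
    have hdisj : Disjoint (Icc σ b) (Ioi b) :=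
      Set.disjoint_left.mpr fun x hx hx' => absurd hx.2 (not_le.mpr hx')
    have hIci : μ (Ici σ) = μ (Ioi σ) := by
      have h' : Ici σ = {σ} ∪ Ioi σ := by rw [Set.union_comm, Set.Ioi_union_left]
      refine le_antisymm ?_ (measure_mono Ioi_subset_Ici_self)
      rw [h']
      exact (measure_union_le _ _).trans (by rw [hatom σ, zero_add])
    rw [← measure_union hdisj measurableSet_Ioi, Icc_union_Ioi_eq_Ici hσ.2, hIci]
  -- assemble
  rw [hEsplit, hswap]
  have hconst : μ (Ioi b) * ENNReal.ofReal (exp (r * b) - exp (r * a))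
      = ∫⁻ σ in Ioc a b, w σ * μ (Ioi b) ∂volume := by
    rw [lintegral_mul_const _ hwm, lint_w r hr hab, mul_comm]
  rw [add_assoc, hconst, ← lintegral_add_left (f := fun σ => w σ * μ (Icc σ b)) (hwm.mul hTmeas)]
  congr 1
  refine setLIntegral_congr_fun_ae measurableSet_Ioc (ae_of_all _ fun σ hσ => ?_)
  rw [← mul_add, hICC σ hσ]

lemma vol_null (f : ℝ → ℝ) {s : Set ℝ} (hs : MeasurableSet s) (h0 : volume s = 0) :
    volume.withDensity (fun x => ENNReal.ofReal (f x)) s = 0 := by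
  rw [withDensity_apply _ hs, Measure.restrict_eq_zero.mpr h0, lintegral_zero_measure]

/-- The exponential tail bound for MHR distributions, in terms of the median. -/
lemma tail_bound {μ : Measure ℝ} {f : ℝ → ℝ} {m : ℝ}
    (hprob : IsProbabilityMeasure μ) (hf : ∀ x, 0 ≤ f x)
    (hdens : μ = volume.withDensity (fun x => ENNReal.ofReal (f x)))
    (hneg : μ (Iio 0) = 0)
    (hmhr : ∀ x y : ℝ, x ≤ y → μ (Set.Ioi y) ≠ 0 →
      f x / (μ (Set.Ioi x)).toReal ≤ f y / (μ (Set.Ioi y)).toReal)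
    (hm : 0 < m) (hmed : μ (Iic m) = 2⁻¹) {x : ℝ} (hx : m ≤ x) :
    μ (Ioi x) ≤ ENNReal.ofReal (exp (-(log 2 / m * x))) := by
  have hatom : ∀ c : ℝ, μ {c} = 0 := fun c => by
    rw [hdens]; exact vol_null _ (measurableSet_singleton c) (volume_singleton)
  have hIic0 : μ (Iic 0) = 0 := by
    have h' : Iic (0:ℝ) = Iio 0 ∪ {0} := by
      ext y; simp [le_iff_lt_or_eq]
    rw [h']; exact measure_union_null hneg (hatom 0)
  have hTm : μ (Ioi m) = 2⁻¹ := by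
    have h' := measure_compl (measurableSet_Iic (a := m)) (measure_ne_top μ _)
    rw [compl_Iic, hmed, measure_univ] at h'
    rw [h', ← ENNReal.inv_two_add_inv_two, ENNReal.add_sub_cancel_right (by norm_num)]
  have hM0m : μ (Ioc 0 m) = 2⁻¹ := by
    have hu : Iic (0:ℝ) ∪ Ioc 0 m = Iic m := Iic_union_Ioc_eq_Iic hm.le
    have hdisj : Disjoint (Iic (0:ℝ)) (Ioc 0 m) :=
      Set.disjoint_left.mpr fun y hy hy' => absurd hy'.1 (not_lt.mpr hy)
    have h' := measure_union (μ := μ) hdisj measurableSet_Ioc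
    rw [hu, hmed, hIic0, zero_add] at h'
    exact h'.symm
  have hSmeas : Measurable fun t => μ (Ioi t) :=
    Antitone.measurable (fun s t h => measure_mono (Ioi_subset_Ioi h))
  -- Step A : hazard rate at least log 2 / m above the median
  have stepA : ∀ σ₀, m ≤ σ₀ → log 2 * (μ (Ioi σ₀)).toReal ≤ m * f σ₀ := by
    intro σ₀ hσ₀
    by_cases hT0 : μ (Ioi σ₀) = 0
    · rw [hT0]; simpa using mul_nonneg hm.le (hf σ₀)
    · have hSfin : μ (Ioi σ₀) ≠ ⊤ := measure_ne_top μ _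
      have hSσ : 0 < (μ (Ioi σ₀)).toReal := ENNReal.toReal_pos hT0 hSfin
      set S : ℝ → ℝ := fun t => (μ (Ioi t)).toReal with hS
      set r : ℝ := f σ₀ / S σ₀ with hrdef
      have hr : 0 ≤ r := div_nonneg (hf _) hSσ.le
      have hφm : Measurable fun τ => ENNReal.ofReal (r * S τ) :=
        (measurable_const.mul hSmeas.ennreal_toReal).ennreal_ofReal
      have hwm : Measurable fun τ => ENNReal.ofReal (exp (r * τ)) := by
        apply Measurable.ennreal_ofReal; fun_prop
      have hfle : ∀ τ, τ ≤ σ₀ → f τ ≤ r * S τ := by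
        intro τ hτ
        have h1 := hmhr τ σ₀ hτ hT0
        have hSτ : 0 < S τ := lt_of_lt_of_le hSσ
          ((ENNReal.toReal_le_toReal hSfin (measure_ne_top μ _)).mpr
            (measure_mono (Ioi_subset_Ioi hτ)))
        calc f τ = f τ / S τ * S τ := (div_mul_cancel₀ _ hSτ.ne').symm
          _ ≤ r * S τ := mul_le_mul_of_nonneg_right h1 hSτ.le
      have hcmp : μ.restrict (Ioc 0 m)
          ≤ ((volume.withDensity fun τ => ENNReal.ofReal (r * S τ)).restrict (Ioc 0 m)) := by
        refine Measure.le_iff.mpr fun s hs => ?_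
        rw [Measure.restrict_apply hs, Measure.restrict_apply hs, hdens,
          withDensity_apply _ (hs.inter measurableSet_Ioc),
          withDensity_apply _ (hs.inter measurableSet_Ioc)]
        refine setLIntegral_mono hφm fun τ hτ => ?_
        exact ENNReal.ofReal_le_ofReal (hfle τ (hτ.2.2.trans hσ₀))
      have hEA : (∫⁻ τ in Ioc 0 m, ENNReal.ofReal (exp (r * τ)) ∂μ)
          ≤ ∫⁻ σ in Ioc 0 m, ENNReal.ofReal (r * exp (r * σ)) * μ (Ioi σ) ∂volume := by
        calc (∫⁻ τ in Ioc 0 m, ENNReal.ofReal (exp (r * τ)) ∂μ)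
            ≤ ∫⁻ τ, ENNReal.ofReal (exp (r * τ))
                ∂((volume.withDensity fun τ => ENNReal.ofReal (r * S τ)).restrict (Ioc 0 m)) :=
              lintegral_mono' hcmp le_rfl
          _ = ∫⁻ τ in Ioc 0 m, ENNReal.ofReal (r * S τ) * ENNReal.ofReal (exp (r * τ)) ∂volume := by
              rw [restrict_withDensity measurableSet_Ioc,
                lintegral_withDensity_eq_lintegral_mul _ hφm hwm]
              rfl
          _ = ∫⁻ σ in Ioc 0 m, ENNReal.ofReal (r * exp (r * σ)) * μ (Ioi σ) ∂volume := by
              refine setLIntegral_congr_fun_ae measurableSet_Ioc (ae_of_all _ fun σ _ => ?_)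
              rw [← ENNReal.ofReal_mul (mul_nonneg hr ENNReal.toReal_nonneg)]
              rw [show r * S σ * exp (r * σ) = r * exp (r * σ) * (μ (Ioi σ)).toReal by
                simp only [hS]; ring]
              rw [ENNReal.ofReal_mul (mul_nonneg hr (exp_pos _).le),
                ENNReal.ofReal_toReal (measure_ne_top μ _)]
      have hAfin : (∫⁻ σ in Ioc 0 m, ENNReal.ofReal (r * exp (r * σ)) * μ (Ioi σ) ∂volume) ≠ ⊤ := by
        have hb : ∀ σ ∈ Ioc (0:ℝ) m, ENNReal.ofReal (r * exp (r * σ)) * μ (Ioi σ)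
            ≤ ENNReal.ofReal (r * exp (r * m)) := by
          intro σ hσ
          calc ENNReal.ofReal (r * exp (r * σ)) * μ (Ioi σ)
              ≤ ENNReal.ofReal (r * exp (r * m)) * 1 :=
                mul_le_mul' (ENNReal.ofReal_le_ofReal (mul_le_mul_of_nonneg_left
                  (exp_le_exp.mpr (mul_le_mul_of_nonneg_left hσ.2 hr)) hr)) prob_le_one
            _ = ENNReal.ofReal (r * exp (r * m)) := mul_one _
        refine ne_of_lt (lt_of_le_of_lt (setLIntegral_mono measurable_const hb) ?_)
        rw [setLIntegral_const]
        exact ENNReal.mul_lt_top ENNReal.ofReal_lt_top (by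
          rw [Real.volume_Ioc]; exact ENNReal.ofReal_lt_top)
      have hid := exp_identity μ hatom hr hm.le (a := 0) (b := m)
      rw [mul_zero, exp_zero, ENNReal.ofReal_one, one_mul, hTm, hM0m] at hid
      have hle : (2⁻¹ : ℝ≥0∞) + (∫⁻ σ in Ioc 0 m, ENNReal.ofReal (r * exp (r * σ)) * μ (Ioi σ) ∂volume)
          ≤ (∫⁻ σ in Ioc 0 m, ENNReal.ofReal (r * exp (r * σ)) * μ (Ioi σ) ∂volume)
            + 2⁻¹ * ENNReal.ofReal (exp (r * m) - 1) := by
        rw [← hid]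
        exact add_le_add_left hEA _
      rw [add_comm (2⁻¹ : ℝ≥0∞)] at hle
      have h2 := (ENNReal.add_le_add_iff_left hAfin).mp hle
      rw [← mul_one (2⁻¹ : ℝ≥0∞)] at h2
      have hkey : (1:ℝ≥0∞) ≤ ENNReal.ofReal (exp (r * m) - 1) := by
        rw [mul_assoc] at h2
        have h4 := (ENNReal.mul_le_mul_iff_right (a := (2:ℝ≥0∞)⁻¹) (by norm_num) (by norm_num)).mp h2
        rwa [one_mul] at h4
      have h2exp : (2:ℝ) ≤ exp (r * m) := by
        have := ENNReal.one_le_ofReal.mp hkey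
        linarith
      have hlog : log 2 ≤ r * m := (Real.log_le_iff_le_exp (by norm_num)).mpr h2exp
      have h3 : f σ₀ / S σ₀ * m * S σ₀ = m * f σ₀ := by
        rw [div_mul_eq_mul_div, div_mul_cancel₀ _ hSσ.ne']
        ring
      nlinarith [mul_le_mul_of_nonneg_right hlog hSσ.le]
  -- Step B : propagate the tail bound
  set S : ℝ → ℝ := fun t => (μ (Ioi t)).toReal with hS
  have hSm : Measurable S := by rw [hS]; exact hSmeas.ennreal_toReal
  set r : ℝ := log 2 / m with hrdef
  have hr : 0 ≤ r := div_nonneg (log_nonneg one_le_two) hm.le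
  have hrm : r * m = log 2 := div_mul_cancel₀ _ hm.ne'
  have hexp2 : exp (r * m) = 2 := by rw [hrm, exp_log two_pos]
  have hφm : Measurable fun τ => ENNReal.ofReal (r * S τ) :=
    (measurable_const.mul hSm).ennreal_ofReal
  have hwm : Measurable fun τ => ENNReal.ofReal (exp (r * τ)) := by
    apply Measurable.ennreal_ofReal; fun_prop
  have hfge : ∀ τ, m ≤ τ → r * S τ ≤ f τ := by
    intro τ hτ
    have h1 := stepA τ hτ
    rw [hrdef, hS, div_mul_eq_mul_div, div_le_iff₀ hm]
    linarith
  have hcmp : ((volume.withDensity fun τ => ENNReal.ofReal (r * S τ)).restrict (Ioc m x))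
      ≤ μ.restrict (Ioc m x) := by
    refine Measure.le_iff.mpr fun s hs => ?_
    rw [Measure.restrict_apply hs, Measure.restrict_apply hs, hdens,
      withDensity_apply _ (hs.inter measurableSet_Ioc),
      withDensity_apply _ (hs.inter measurableSet_Ioc)]
    refine setLIntegral_mono' (hs.inter measurableSet_Ioc) fun τ hτ => ?_
    exact ENNReal.ofReal_le_ofReal (hfge τ hτ.2.1.le)
  have hAE : (∫⁻ σ in Ioc m x, ENNReal.ofReal (r * exp (r * σ)) * μ (Ioi σ) ∂volume)
      ≤ ∫⁻ τ in Ioc m x, ENNReal.ofReal (exp (r * τ)) ∂μ := by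
    calc (∫⁻ σ in Ioc m x, ENNReal.ofReal (r * exp (r * σ)) * μ (Ioi σ) ∂volume)
        = ∫⁻ τ in Ioc m x, ENNReal.ofReal (r * S τ)
            * ENNReal.ofReal (exp (r * τ)) ∂volume := by
          refine setLIntegral_congr_fun_ae measurableSet_Ioc (ae_of_all _ fun σ _ => ?_)
          have hSnn : 0 ≤ S σ := ENNReal.toReal_nonneg
          have hμS : μ (Ioi σ) = ENNReal.ofReal (S σ) :=
            (ENNReal.ofReal_toReal (measure_ne_top μ _)).symm
          rw [hμS, ← ENNReal.ofReal_mul (mul_nonneg hr (exp_pos _).le),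
            ← ENNReal.ofReal_mul (mul_nonneg hr hSnn)]
          congr 1
          ring
      _ = ∫⁻ τ, ENNReal.ofReal (exp (r * τ))
            ∂((volume.withDensity fun τ => ENNReal.ofReal (r * S τ)).restrict (Ioc m x)) := by
          rw [restrict_withDensity measurableSet_Ioc,
            lintegral_withDensity_eq_lintegral_mul _ hφm hwm]
          rfl
      _ ≤ ∫⁻ τ in Ioc m x, ENNReal.ofReal (exp (r * τ)) ∂μ := lintegral_mono' hcmp le_rfl
  have hAfin : (∫⁻ σ in Ioc m x, ENNReal.ofReal (r * exp (r * σ)) * μ (Ioi σ) ∂volume) ≠ ⊤ := by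
    have hb : ∀ σ ∈ Ioc m x, ENNReal.ofReal (r * exp (r * σ)) * μ (Ioi σ)
        ≤ ENNReal.ofReal (r * exp (r * x)) := by
      intro σ hσ
      calc ENNReal.ofReal (r * exp (r * σ)) * μ (Ioi σ)
          ≤ ENNReal.ofReal (r * exp (r * x)) * 1 :=
            mul_le_mul' (ENNReal.ofReal_le_ofReal (mul_le_mul_of_nonneg_left
              (exp_le_exp.mpr (mul_le_mul_of_nonneg_left hσ.2 hr)) hr)) prob_le_one
        _ = ENNReal.ofReal (r * exp (r * x)) := mul_one _
    refine ne_of_lt (lt_of_le_of_lt (setLIntegral_mono measurable_const hb) ?_)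
    rw [setLIntegral_const]
    exact ENNReal.mul_lt_top ENNReal.ofReal_lt_top (by
      rw [Real.volume_Ioc]; exact ENNReal.ofReal_lt_top)
  have hid := exp_identity μ hatom hr hx (a := m) (b := x)
  have hcancel : μ (Ioi x) * ENNReal.ofReal (exp (r * x) - exp (r * m))
      ≤ ENNReal.ofReal (exp (r * m)) * μ (Ioc m x) := by
    have hle : (∫⁻ σ in Ioc m x, ENNReal.ofReal (r * exp (r * σ)) * μ (Ioi σ) ∂volume)
        + μ (Ioi x) * ENNReal.ofReal (exp (r * x) - exp (r * m))
        ≤ (∫⁻ σ in Ioc m x, ENNReal.ofReal (r * exp (r * σ)) * μ (Ioi σ) ∂volume)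
          + ENNReal.ofReal (exp (r * m)) * μ (Ioc m x) := by
      calc (∫⁻ σ in Ioc m x, ENNReal.ofReal (r * exp (r * σ)) * μ (Ioi σ) ∂volume)
          + μ (Ioi x) * ENNReal.ofReal (exp (r * x) - exp (r * m))
          ≤ (∫⁻ τ in Ioc m x, ENNReal.ofReal (exp (r * τ)) ∂μ)
            + μ (Ioi x) * ENNReal.ofReal (exp (r * x) - exp (r * m)) := add_le_add_left hAE _
        _ = ENNReal.ofReal (exp (r * m)) * μ (Ioc m x)
            + ∫⁻ σ in Ioc m x, ENNReal.ofReal (r * exp (r * σ)) * μ (Ioi σ) ∂volume := hid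
        _ = (∫⁻ σ in Ioc m x, ENNReal.ofReal (r * exp (r * σ)) * μ (Ioi σ) ∂volume)
            + ENNReal.ofReal (exp (r * m)) * μ (Ioc m x) := add_comm _ _
    exact (ENNReal.add_le_add_iff_left hAfin).mp hle
  have hTsum : μ (Ioc m x) + μ (Ioi x) = 2⁻¹ := by
    have hdisj : Disjoint (Ioc m x) (Ioi x) :=
      Set.disjoint_left.mpr fun y hy hy' => absurd hy.2 (not_le.mpr hy')
    rw [← hTm, ← measure_union (μ := μ) hdisj measurableSet_Ioi, Ioc_union_Ioi_eq_Ioi hx]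
  have hfinal : μ (Ioi x) * ENNReal.ofReal (exp (r * x)) ≤ 1 := by
    have hsplit : ENNReal.ofReal (exp (r * x))
        = ENNReal.ofReal (exp (r * m)) + ENNReal.ofReal (exp (r * x) - exp (r * m)) := by
      rw [← ENNReal.ofReal_add (exp_pos _).le
        (sub_nonneg.mpr (exp_le_exp.mpr (mul_le_mul_of_nonneg_left hx hr)))]
      ring_nf
    calc μ (Ioi x) * ENNReal.ofReal (exp (r * x))
        = μ (Ioi x) * ENNReal.ofReal (exp (r * m))
          + μ (Ioi x) * ENNReal.ofReal (exp (r * x) - exp (r * m)) := by rw [hsplit, mul_add]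
      _ ≤ μ (Ioi x) * ENNReal.ofReal (exp (r * m))
          + ENNReal.ofReal (exp (r * m)) * μ (Ioc m x) := add_le_add_right hcancel _
      _ = ENNReal.ofReal (exp (r * m)) * (μ (Ioc m x) + μ (Ioi x)) := by ring
      _ = 2 * 2⁻¹ := by rw [hTsum, hexp2, ENNReal.ofReal_ofNat]
      _ = 1 := ENNReal.mul_inv_cancel (by norm_num) (by norm_num)
  have hinv : μ (Ioi x) ≤ (ENNReal.ofReal (exp (r * x)))⁻¹ :=
    ENNReal.le_inv_iff_mul_le.mpr hfinal
  calc μ (Ioi x) ≤ (ENNReal.ofReal (exp (r * x)))⁻¹ := hinv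
    _ = ENNReal.ofReal ((exp (r * x))⁻¹) := (ENNReal.ofReal_inv_of_pos (exp_pos _)).symm
    _ = ENNReal.ofReal (exp (-(r * x))) := by rw [exp_neg]


/-- The `7/4` integral bound. -/
lemma integral_bound :
    (∫⁻ u in Ioo (0:ℝ) 1, ENNReal.ofReal (max 1 (log (1/(1-u)) / log 2)) ∂volume)
      ≤ ENNReal.ofReal (7/4) := by
  have hlog2 : (0:ℝ) < log 2 := log_pos one_lt_two
  set g : ℝ → ℝ := fun u => max (log (1/(1-u)) / log 2 - 1) 0 with hg
  have hgm : Measurable g := by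
    apply Measurable.max _ measurable_const
    apply Measurable.sub _ measurable_const
    apply Measurable.div _ measurable_const
    exact Real.measurable_log.comp ((measurable_const.sub measurable_id).const_div 1)
  have hmax : ∀ u : ℝ, ENNReal.ofReal (max 1 (log (1/(1-u)) / log 2))
      = 1 + ENNReal.ofReal (g u) := by
    intro u
    have h1 : max 1 (log (1/(1-u)) / log 2) = 1 + g u := by
      show max 1 (log (1/(1-u)) / log 2) = 1 + max (log (1/(1-u)) / log 2 - 1) 0
      rcases le_total (log (1/(1-u)) / log 2) 1 with h | h
      · rw [max_eq_left h, max_eq_right (by linarith)]; ring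
      · rw [max_eq_right h, max_eq_left (by linarith)]; ring
    rw [h1, ENNReal.ofReal_add zero_le_one (le_max_right _ _), ENNReal.ofReal_one]
  simp_rw [hmax]
  rw [lintegral_add_left measurable_const, setLIntegral_const, one_mul, Real.volume_Ioo]
  -- layer cake for g
  have hJ : (∫⁻ u in Ioo (0:ℝ) 1, ENNReal.ofReal (g u) ∂volume)
      = ∫⁻ t in Ioi (0:ℝ), ENNReal.ofReal (exp (-((1+t) * log 2))) ∂volume := by
    rw [lintegral_eq_lintegral_meas_lt (f := g) _ (ae_of_all _ fun u => le_max_right _ _)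
      hgm.aemeasurable]
    refine setLIntegral_congr_fun_ae measurableSet_Ioi (ae_of_all _ fun t ht => ?_)
    have ht' : (0:ℝ) < t := ht
    have hsetm : MeasurableSet {u : ℝ | t < g u} := measurableSet_lt measurable_const hgm
    rw [Measure.restrict_apply hsetm]
    have hEpos : 0 < exp (-((1+t) * log 2)) := exp_pos _
    have hEle : exp (-((1+t) * log 2)) < 1 := by
      have h0 : -((1+t) * log 2) < 0 := by nlinarith
      calc exp (-((1+t) * log 2)) < exp 0 := exp_lt_exp.mpr h0
        _ = 1 := exp_zero
    have hseteq : {u : ℝ | t < g u} ∩ Ioo 0 1 = Ioo (1 - exp (-((1+t) * log 2))) 1 := by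
      ext u
      simp only [mem_inter_iff, mem_setOf_eq, mem_Ioo, hg]
      constructor
      · rintro ⟨hgu, hu0, hu1⟩
        have h1u : 0 < 1 - u := by linarith
        have h2 : t < log (1/(1-u)) / log 2 - 1 := by
          rcases lt_max_iff.mp hgu with h | h
          · exact h
          · linarith
        have h3 : (1+t) * log 2 < log (1/(1-u)) := by
          have h6 := (lt_div_iff₀ hlog2).mp (show t + 1 < log (1/(1-u)) / log 2 by linarith)
          nlinarith
        have h4 : 1 - u < exp (-((1+t) * log 2)) := by
          have h5 : log (1-u) < -((1+t) * log 2) := by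
            rw [show (1:ℝ)/(1-u) = (1-u)⁻¹ from one_div _, log_inv] at h3
            linarith
          calc 1 - u = exp (log (1-u)) := (exp_log h1u).symm
            _ < exp (-((1+t) * log 2)) := exp_lt_exp.mpr h5
        exact ⟨by linarith, hu1⟩
      · rintro ⟨hu0, hu1⟩
        have h1u : 0 < 1 - u := by linarith
        have h4 : 1 - u < exp (-((1+t) * log 2)) := by linarith
        have h5 : log (1-u) < -((1+t) * log 2) := by
          calc log (1-u) < log (exp (-((1+t) * log 2))) := log_lt_log h1u h4
            _ = -((1+t) * log 2) := log_exp _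
        have h3 : (1+t) * log 2 < log (1/(1-u)) := by
          rw [show (1:ℝ)/(1-u) = (1-u)⁻¹ from one_div _, log_inv]
          linarith
        have h2 : t < log (1/(1-u)) / log 2 - 1 := by
          have h6 : (t+1) * log 2 < log (1/(1-u)) := by nlinarith
          have h7 := (lt_div_iff₀ hlog2).mpr h6
          linarith
        exact ⟨lt_max_iff.mpr (Or.inl h2), by linarith, hu1⟩
    rw [hseteq, Real.volume_Ioo]
    congr 1
    ring
  rw [hJ]
  -- evaluate the exponential integral
  have hEeq : (fun t : ℝ => exp (-((1+t) * log 2)))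
      = fun t : ℝ => exp (-log 2) * exp (-log 2 * t) := by
    funext t; rw [← exp_add]; ring_nf
  have hInt : IntegrableOn (fun t : ℝ => exp (-((1+t) * log 2))) (Ioi (0:ℝ)) := by
    rw [hEeq]
    exact (exp_neg_integrableOn_Ioi 0 hlog2).const_mul _
  have hval : ∫ t in Ioi (0:ℝ), exp (-((1+t) * log 2)) = exp (-log 2) / log 2 := by
    have hderiv : ∀ x ∈ Ioi (0:ℝ),
        HasDerivAt (fun t : ℝ => -exp (-((1+t) * log 2)) / log 2)
          (exp (-((1+x) * log 2))) x := by
      intro x _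
      have h1 : HasDerivAt (fun t : ℝ => -((1+t) * log 2)) (-log 2) x := by
        simpa using (((hasDerivAt_id x).const_add (1:ℝ)).mul_const (log 2)).fun_neg
      have h2 := (h1.exp).fun_neg.div_const (log 2)
      refine h2.congr_deriv ?_
      rw [mul_neg, neg_neg, mul_div_assoc, div_self hlog2.ne', mul_one]
    have hcont : ContinuousWithinAt (fun t : ℝ => -exp (-((1+t) * log 2)) / log 2)
        (Ici (0:ℝ)) 0 := by
      apply Continuous.continuousWithinAt
      continuity
    have htend : Tendsto (fun t : ℝ => -exp (-((1+t) * log 2)) / log 2) atTop (𝓝 0) := by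
      have h1 : Tendsto (fun t : ℝ => (1+t) * log 2) atTop atTop :=
        (tendsto_atTop_add_const_left _ 1 tendsto_id).atTop_mul_const hlog2
      have h2 : Tendsto (fun t : ℝ => -((1+t) * log 2)) atTop atBot :=
        tendsto_neg_atTop_atBot.comp h1
      have h3 : Tendsto (fun t : ℝ => exp (-((1+t) * log 2))) atTop (𝓝 0) :=
        tendsto_exp_atBot.comp h2
      have h4 := (h3.neg).div_const (log 2)
      simpa using h4
    have := integral_Ioi_of_hasDerivAt_of_tendsto hcont hderiv hInt htend
    rw [this]
    norm_num
    ring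
  have hJval : (∫⁻ t in Ioi (0:ℝ), ENNReal.ofReal (exp (-((1+t) * log 2))) ∂volume)
      = ENNReal.ofReal (exp (-log 2) / log 2) := by
    rw [← hval, ← ofReal_integral_eq_lintegral_ofReal hInt
      (ae_of_all _ fun t => (exp_pos _).le)]
  rw [hJval]
  have hle34 : exp (-log 2) / log 2 ≤ 3/4 := by
    rw [exp_neg, exp_log two_pos, div_le_iff₀ hlog2]
    linarith [Real.log_two_gt_d9]
  calc ENNReal.ofReal (1 - 0) + ENNReal.ofReal (exp (-log 2) / log 2)
      ≤ ENNReal.ofReal 1 + ENNReal.ofReal (3/4) := by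
        refine add_le_add (by norm_num) (ENNReal.ofReal_le_ofReal hle34)
    _ = ENNReal.ofReal (7/4) := by
        rw [← ENNReal.ofReal_add (by norm_num) (by norm_num)]
        norm_num


end RobustAux

open RobustAux Set Real Filter Topology in
/-- If all marginals are MHR distributions on the nonnegative reals with
densities, `med j` is the median of `F_j` for every `j`, and item `i` has a (weakly) largest
median, then the single pricing `p` setting `p i = med i` and `p j = ∞` for `j ≠ i` is
`3.5`-max-min optimal: `R* ≤ 3.5 · R(p)`. -/
theorem mhr_max_median_single_price_is_three_point_five_max_min_optimal
    (n : ℕ) (B : BuyerRule n) (marg : Fin n → Measure ℝ)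
    (f : Fin n → ℝ → ℝ) (hf : ∀ j x, 0 ≤ f j x)
    (hdens : ∀ j, marg j = volume.withDensity (fun x => ENNReal.ofReal (f j x)))
    (hprob : ∀ j, IsProbabilityMeasure (marg j))
    (hnonneg : ∀ j, marg j (Set.Iio 0) = 0)
    (hmhr : ∀ j, IsMHR (f j) (marg j))
    (med : Fin n → ℝ)
    (hmed : ∀ j : Fin n, marg j (Set.Iic (med j)) = 2⁻¹)
    (i : Fin n) (hmax : ∀ j : Fin n, med j ≤ med i)
    (p : Fin n → ℝ≥0∞)
    (hpi : p i = ENNReal.ofReal (med i)) (hpj : ∀ j : Fin n, j ≠ i → p j = ⊤) :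
    optRobust B marg ≤ (7 / 2 : ℝ≥0∞) * robustRev B marg p := by
  -- basic facts
  haveI := hprob
  have hIic0 : ∀ j, marg j (Iic 0) = 0 := by
    intro j
    have h' : Iic (0:ℝ) = Iio 0 ∪ {0} := by ext y; simp [le_iff_lt_or_eq]
    rw [h']
    refine measure_union_null (hnonneg j) ?_
    rw [hdens j]
    exact vol_null _ (measurableSet_singleton 0) volume_singleton
  have hmedpos : ∀ j, 0 < med j := by
    intro j
    by_contra h
    push_neg at h
    have h1 : marg j (Iic (med j)) ≤ marg j (Iic 0) := measure_mono (Iic_subset_Iic.mpr h)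
    rw [hmed j, hIic0 j] at h1
    simp at h1
  have hmi : 0 ≤ med i := (hmedpos i).le
  -- cdf's
  set c : Fin n → ℝ → ℝ := fun j x => (marg j (Set.Iic x)).toReal with hc
  have hcdf : ∀ j, CdfLike (c j) := by
    intro j
    constructor
    · intro x y hxy
      exact ENNReal.toReal_mono (measure_ne_top _ _) (measure_mono (Iic_subset_Iic.mpr hxy))
    · intro x; exact ENNReal.toReal_nonneg
    · intro x
      have h1 : marg j (Iic x) ≤ 1 := prob_le_one
      calc (marg j (Iic x)).toReal ≤ (1:ℝ≥0∞).toReal :=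
            ENNReal.toReal_mono (by norm_num) h1
        _ = 1 := by norm_num
    · intro x hx
      have h1 : marg j (Iic x) ≤ marg j (Iic 0) := measure_mono (Iic_subset_Iic.mpr hx.le)
      rw [hIic0 j] at h1
      simp only [hc]
      rw [le_zero_iff.mp h1]
      norm_num
    · intro b u hu
      have hanti : Antitone fun k : ℕ => Iic (b + 1/(k+1)) := by
        intro k l hkl
        apply Iic_subset_Iic.mpr
        have h1 : (1:ℝ)/(l+1) ≤ 1/(k+1) := by
          apply one_div_le_one_div_of_le (by positivity)
          exact_mod_cast add_le_add_left (Nat.cast_le.mpr hkl) 1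
        linarith
      have hinter : ⋂ k : ℕ, Iic (b + 1/(k+1)) = Iic b := by
        ext y
        simp only [mem_iInter, mem_Iic]
        constructor
        · intro h
          by_contra hyb
          push_neg at hyb
          obtain ⟨k, hk⟩ := exists_nat_one_div_lt (sub_pos.mpr hyb)
          have := h k
          linarith
        · intro h k
          have : (0:ℝ) < 1/(k+1) := by positivity
          linarith
      have htend := tendsto_measure_iInter_atTop (μ := marg j)
        (fun k => measurableSet_Iic.nullMeasurableSet) hanti ⟨0, measure_ne_top _ _⟩
      rw [hinter] at htend
      have htoReal : Tendsto (fun k : ℕ => c j (b + 1/(k+1))) atTop (𝓝 (c j b)) :=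
        (ENNReal.tendsto_toReal (measure_ne_top _ _)).comp htend
      exact ge_of_tendsto' htoReal fun k => hu _ (by positivity)
    · intro u hu
      have hmono : Monotone fun k : ℕ => Iic (k : ℝ) := by
        intro k l h
        exact Iic_subset_Iic.mpr (by exact_mod_cast h)
      have htend := tendsto_measure_iUnion_atTop (μ := marg j) hmono
      have huniv : ⋃ k : ℕ, Iic (k:ℝ) = univ := by
        ext y
        simp only [mem_iUnion, mem_Iic, mem_univ, iff_true]
        exact exists_nat_ge y
      rw [huniv, measure_univ] at htend
      have htoReal : Tendsto (fun k : ℕ => c j (k:ℝ)) atTop (𝓝 1) := by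
        have h1 := (ENNReal.tendsto_toReal ENNReal.one_ne_top).comp htend
        exact h1
      obtain ⟨k, hk⟩ := (Filter.Tendsto.eventually_const_le hu htoReal).exists
      exact ⟨k, hk⟩
  -- the uniform measure on (0,1)
  set ν : Measure ℝ := volume.restrict (Ioo (0:ℝ) 1) with hν
  haveI hνprob : IsProbabilityMeasure ν := by
    constructor
    rw [hν, Measure.restrict_apply_univ, Real.volume_Ioo]
    norm_num
  -- the comonotone coupling
  set T : ℝ → (Fin n → ℝ) := fun u j => Q (c j) u with hT
  have hTmeas : Measurable T := measurable_pi_lambda _ fun j => measurable_Q (hcdf j)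
  set F : Measure (Fin n → ℝ) := ν.map T with hF
  have hmap : ∀ j, ν.map (Q (c j)) = marg j := by
    intro j
    have hQm := measurable_Q (hcdf j)
    haveI : IsProbabilityMeasure (ν.map (Q (c j))) :=
      Measure.isProbabilityMeasure_map hQm.aemeasurable
    refine Measure.ext_of_Iic (ν.map (Q (c j))) (marg j) fun b => ?_
    rw [Measure.map_apply hQm measurableSet_Iic, hν,
      Measure.restrict_apply (hQm measurableSet_Iic)]
    have hseteq : Q (c j) ⁻¹' (Iic b) ∩ Ioo 0 1 = Ioo (0:ℝ) 1 ∩ Iic (c j b) := by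
      ext u
      simp only [mem_inter_iff, mem_preimage, mem_Iic, mem_Ioo]
      constructor
      · rintro ⟨hQ, hu⟩
        exact ⟨hu, (Q_le_iff (hcdf j) hu.1 hu.2).mp hQ⟩
      · rintro ⟨hu, hc'⟩
        exact ⟨(Q_le_iff (hcdf j) hu.1 hu.2).mpr hc', hu⟩
    rw [hseteq]
    have hcb0 : 0 ≤ c j b := (hcdf j).nonneg b
    have hcb1 : c j b ≤ 1 := (hcdf j).le_one b
    have hvol : volume (Ioo (0:ℝ) 1 ∩ Iic (c j b)) = ENNReal.ofReal (c j b) := by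
      rcases lt_or_eq_of_le hcb1 with h | h
      · have : Ioo (0:ℝ) 1 ∩ Iic (c j b) = Ioc 0 (c j b) := by
          ext u
          simp only [mem_inter_iff, mem_Ioo, mem_Iic, mem_Ioc]
          constructor
          · rintro ⟨⟨h0, _⟩, hle⟩; exact ⟨h0, hle⟩
          · rintro ⟨h0, hle⟩; exact ⟨⟨h0, lt_of_le_of_lt hle h⟩, hle⟩
        rw [this, Real.volume_Ioc, sub_zero]
      · have : Ioo (0:ℝ) 1 ∩ Iic (c j b) = Ioo 0 1 := by
          ext u
          simp only [mem_inter_iff, mem_Ioo, mem_Iic, and_iff_left_iff_imp]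
          intro hu
          rw [← h] at hu
          exact le_of_lt hu.2
        rw [this, Real.volume_Ioo, ← h]
        norm_num
    rw [hvol]
    exact ENNReal.ofReal_toReal (measure_ne_top (marg j) _)
  have hFcompat : Compatible marg F := by
    constructor
    · exact Measure.isProbabilityMeasure_map hTmeas.aemeasurable
    · intro j
      rw [hF, Measure.map_map (measurable_pi_apply j) hTmeas]
      have hcomp : ((fun v : Fin n → ℝ => v j) ∘ T) = Q (c j) := rfl
      rw [hcomp]
      exact hmap j
  -- quantile bound
  have hQbound : ∀ (j : Fin n), ∀ u ∈ Ioo (0:ℝ) 1,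
      Q (c j) u ≤ med i * max 1 (log (1/(1-u)) / log 2) := by
    intro j u hu
    have hlog2 : (0:ℝ) < log 2 := log_pos one_lt_two
    set z := max 1 (log (1/(1-u)) / log 2) with hz
    have hz1 : (1:ℝ) ≤ z := le_max_left _ _
    have hz0 : (0:ℝ) ≤ z := zero_le_one.trans hz1
    have hxm : med j ≤ med j * z := by nlinarith [hmedpos j]
    have htail := tail_bound (hprob j) (hf j) (hdens j) (hnonneg j) (hmhr j)
      (hmedpos j) (hmed j) hxm
    have h1u : 0 < 1 - u := by linarith [hu.2]
    have hexp : exp (-(log 2 / med j * (med j * z))) ≤ 1 - u := by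
      have heq : log 2 / med j * (med j * z) = log 2 * z := by
        field_simp [(hmedpos j).ne']
      rw [heq]
      have harg : log (1/(1-u)) ≤ log 2 * z := by
        calc log (1/(1-u)) = log 2 * (log (1/(1-u)) / log 2) := by
              field_simp
          _ ≤ log 2 * z := mul_le_mul_of_nonneg_left (le_max_right _ _) hlog2.le
      calc exp (-(log 2 * z)) ≤ exp (-(log (1/(1-u)))) := exp_le_exp.mpr (by linarith)
        _ = 1 - u := by
            rw [show (1:ℝ)/(1-u) = (1-u)⁻¹ from one_div _, log_inv, neg_neg, exp_log h1u]
    have hucx : u ≤ c j (med j * z) := by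
      have hIic : marg j (Iic (med j * z)) = 1 - marg j (Ioi (med j * z)) := by
        have h' := measure_compl (μ := marg j) (measurableSet_Ioi (a := med j * z))
          (measure_ne_top _ _)
        rw [compl_Ioi, measure_univ] at h'
        exact h'
      have h2 : marg j (Ioi (med j * z)) ≤ ENNReal.ofReal (1-u) :=
        htail.trans (ENNReal.ofReal_le_ofReal hexp)
      have hmono : ENNReal.ofReal u ≤ marg j (Iic (med j * z)) := by
        rw [hIic]
        calc ENNReal.ofReal u = 1 - ENNReal.ofReal (1-u) := by
              rw [← ENNReal.ofReal_one, ← ENNReal.ofReal_sub _ h1u.le]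
              norm_num
          _ ≤ 1 - marg j (Ioi (med j * z)) := tsub_le_tsub_left h2 1
      calc u = (ENNReal.ofReal u).toReal := (ENNReal.toReal_ofReal hu.1.le).symm
        _ ≤ (marg j (Iic (med j * z))).toReal :=
            ENNReal.toReal_mono (measure_ne_top _ _) hmono
    refine (Q_le_of_le_c (hcdf j) hu.1 hu.2 hucx).trans ?_
    nlinarith [hmax j, hmedpos j]
  -- revenue bound
  have hrevb : ∀ q : Fin n → ℝ≥0∞, ∀ u ∈ Ioo (0:ℝ) 1,
      B.revenue q (T u) ≤ ENNReal.ofReal (med i * max 1 (log (1/(1-u)) / log 2)) := by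
    intro q u hu
    rw [BuyerRule.revenue]
    cases hch : B.choose (T u) q with
    | none => exact zero_le
    | some j =>
      simp only [Option.elim]
      have hfeas := B.feasible (T u) q j hch
      have hqj : q j = ENNReal.ofReal ((q j).toReal) := (ENNReal.ofReal_toReal hfeas.1).symm
      rw [hqj]
      refine ENNReal.ofReal_le_ofReal ?_
      calc (q j).toReal ≤ T u j := hfeas.2
        _ ≤ med i * max 1 (log (1/(1-u)) / log 2) := hQbound j u hu
  -- upper bound on optRobust
  have hupper : optRobust B marg ≤ ENNReal.ofReal (med i) * ENNReal.ofReal (7/4) := by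
    rw [optRobust]
    refine iSup_le fun q => ?_
    have h1 : robustRev B marg q ≤ expRev B q F := by
      rw [robustRev]
      exact iInf_le_of_le F (iInf_le_of_le hFcompat le_rfl)
    refine h1.trans ?_
    rw [expRev, hF]
    refine (lintegral_map_le _ _).trans ?_
    rw [hν]
    calc (∫⁻ u in Ioo (0:ℝ) 1, B.revenue q (T u) ∂volume)
        ≤ ∫⁻ u in Ioo (0:ℝ) 1,
            ENNReal.ofReal (med i * max 1 (log (1/(1-u)) / log 2)) ∂volume :=
          setLIntegral_mono' measurableSet_Ioo (hrevb q)
      _ = ENNReal.ofReal (med i)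
            * ∫⁻ u in Ioo (0:ℝ) 1, ENNReal.ofReal (max 1 (log (1/(1-u)) / log 2)) ∂volume := by
          rw [← lintegral_const_mul _ (by
            apply Measurable.ennreal_ofReal
            apply Measurable.max measurable_const
            apply Measurable.div _ measurable_const
            exact Real.measurable_log.comp ((measurable_const.sub measurable_id).const_div 1))]
          refine setLIntegral_congr_fun_ae measurableSet_Ioo (ae_of_all _ fun u _ => ?_)
          rw [← ENNReal.ofReal_mul hmi]
      _ ≤ ENNReal.ofReal (med i) * ENNReal.ofReal (7/4) :=
          mul_le_mul_right integral_bound _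
  -- lower bound on robustRev p
  have hlower : ENNReal.ofReal (med i) * 2⁻¹ ≤ robustRev B marg p := by
    rw [robustRev]
    refine le_iInf fun G => le_iInf fun hG => ?_
    obtain ⟨hGprob, hGmarg⟩ := hG
    have hrev : ∀ v : Fin n → ℝ, med i ≤ v i →
        B.revenue p v = ENNReal.ofReal (med i) := by
      intro v hv
      have hact := B.active v p ⟨i, by rw [hpi]; exact ENNReal.ofReal_ne_top,
        by rw [hpi, ENNReal.toReal_ofReal hmi]; exact hv⟩
      obtain ⟨j, hj⟩ : ∃ j, B.choose v p = some j := by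
        cases h : B.choose v p with
        | none => rw [h] at hact; simp at hact
        | some j => exact ⟨j, rfl⟩
      have hfeas := B.feasible v p j hj
      have hji : j = i := by
        by_contra hne
        exact hfeas.1 (hpj j hne)
      rw [BuyerRule.revenue, hj]
      simp only [Option.elim]
      rw [hji, hpi]
    have hsetm : MeasurableSet {v : Fin n → ℝ | med i ≤ v i} :=
      measurableSet_le measurable_const (measurable_pi_apply i)
    have hGset : 2⁻¹ ≤ G {v : Fin n → ℝ | med i ≤ v i} := by
      have h1 : G {v : Fin n → ℝ | med i ≤ v i}
          = (G.map (fun v => v i)) (Ici (med i)) := by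
        rw [Measure.map_apply (measurable_pi_apply i) measurableSet_Ici]
        rfl
      rw [h1, hGmarg i]
      have h2 : marg i (Ioi (med i)) = 2⁻¹ := by
        have h' := measure_compl (μ := marg i) (measurableSet_Iic (a := med i))
          (measure_ne_top _ _)
        rw [compl_Iic, hmed i, measure_univ] at h'
        rw [h', ← ENNReal.inv_two_add_inv_two, ENNReal.add_sub_cancel_right (by norm_num)]
      rw [← h2]
      exact measure_mono Ioi_subset_Ici_self
    calc ENNReal.ofReal (med i) * 2⁻¹
        ≤ ENNReal.ofReal (med i) * G {v : Fin n → ℝ | med i ≤ v i} :=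
          mul_le_mul_right hGset _
      _ = ∫⁻ v, {v : Fin n → ℝ | med i ≤ v i}.indicator
            (fun _ => ENNReal.ofReal (med i)) v ∂G := by
          rw [lintegral_indicator hsetm, setLIntegral_const]
      _ ≤ ∫⁻ v, B.revenue p v ∂G := by
          refine lintegral_mono fun v => ?_
          rw [Set.indicator_apply]
          split_ifs with hmem
          · rw [hrev v hmem]
          · exact zero_le
      _ = expRev B p G := rfl
  -- numeric assembly
  have hnum : ENNReal.ofReal (med i) * ENNReal.ofReal (7/4)
      = (7/2 : ℝ≥0∞) * (ENNReal.ofReal (med i) * 2⁻¹) := by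
    have h1 : ENNReal.ofReal ((7:ℝ)/4) = (7/2 : ℝ≥0∞) * 2⁻¹ := by
      rw [show ((7:ℝ)/4) = (7/2) * (1/2) by norm_num,
        ENNReal.ofReal_mul (by norm_num),
        ENNReal.ofReal_div_of_pos (by norm_num),
        show ((1:ℝ)/2) = (2:ℝ)⁻¹ from one_div _,
        ENNReal.ofReal_inv_of_pos (by norm_num)]
      norm_num
    rw [h1]
    ring
  calc optRobust B marg ≤ ENNReal.ofReal (med i) * ENNReal.ofReal (7/4) := hupper
    _ = (7/2 : ℝ≥0∞) * (ENNReal.ofReal (med i) * 2⁻¹) := hnum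
    _ ≤ (7/2 : ℝ≥0∞) * robustRev B marg p := mul_le_mul_right hlower _


end
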